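/- Under the trajectory setup, suppose β ≥ 0 and B(y) ≤ β r(y) for all y ∈ ℝⁿ. Then J − Ĵ(x(0)) ≤ β·J. -/

import Mathlib

open Matrix Filter Topology

/-- Under the trajectory setup, if `β ≥ 0` and
`B(y) ≤ β r(y)` for all `y`, then `J − Ĵ(x(0)) ≤ β J`. -/
theorem bellman_residual_cost_lower_bound
    {n m : ℕ} (hn : 0 < n) (hm : 0 < m)
    (q : (Fin n → ℝ) → ℝ) (u : (Fin n → ℝ) → Fin m → ℝ)
    (f : (Fin n → ℝ) → Fin n → ℝ)
    (R : (Fin n → ℝ) → Matrix (Fin m) (Fin m) ℝ)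
    (G : (Fin n → ℝ) → Matrix (Fin n) (Fin m) ℝ)
    (hq : Continuous q) (hu : Continuous u) (hf : Continuous f)
    (hR : Continuous R) (hG : Continuous G)
    (hRpsd : ∀ y, (R y).PosSemidef)
    (hqnn : ∀ y, 0 ≤ q y)
    (Jhat : (Fin n → ℝ) → ℝ) (gradJ : (Fin n → ℝ) → Fin n → ℝ)
    (hJd : ∀ y, HasFDerivAt Jhat
      (∑ i, gradJ y i • (ContinuousLinearMap.proj i : (Fin n → ℝ) →L[ℝ] ℝ)) y)
    (hgradc : Continuous gradJ)
    (hJ0 : Jhat 0 = 0)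
    (r : (Fin n → ℝ) → ℝ)
    (hr : ∀ y, r y = q y + (1 / 2) * (u y ⬝ᵥ (R y *ᵥ u y)))
    (B : (Fin n → ℝ) → ℝ)
    (hB : ∀ y, B y = r y + gradJ y ⬝ᵥ (f y + G y *ᵥ u y))
    (x : ℝ → Fin n → ℝ)
    (hx : ∀ t : ℝ, 0 ≤ t → HasDerivAt x (f (x t) + G (x t) *ᵥ u (x t)) t)
    (hxlim : Tendsto x atTop (𝓝 0))
    (J : ℝ)
    (hJ : Tendsto (fun T => ∫ t in (0:ℝ)..T, r (x t)) atTop (𝓝 J))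
    (β : ℝ) (hβ : 0 ≤ β)
    (hBr : ∀ y : Fin n → ℝ, B y ≤ β * r y) :
    J - Jhat (x 0) ≤ β * J := by
  -- derivative of Jhat ∘ x
  set v : ℝ → Fin n → ℝ := fun t => f (x t) + G (x t) *ᵥ u (x t) with hv
  have hg : ∀ t : ℝ, 0 ≤ t → HasDerivAt (fun s => Jhat (x s))
      (gradJ (x t) ⬝ᵥ v t) t := by
    intro t ht
    have h1 := (hJd (x t)).comp_hasDerivAt t (hx t ht)
    exact h1.congr_deriv (by simp [dotProduct, v])
  -- continuity facts
  have hxc : ∀ t : ℝ, 0 ≤ t → ContinuousAt x t := fun t ht => (hx t ht).continuousAt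
  have hrc : Continuous r := by
    have : Continuous fun y => q y + (1 / 2) * (u y ⬝ᵥ (R y *ᵥ u y)) := by
      simp only [dotProduct, Matrix.mulVec, Pi.add_apply]
      fun_prop
    simpa [funext hr] using this
  have hvc : ∀ t : ℝ, 0 ≤ t → ContinuousAt (fun s => gradJ (x s) ⬝ᵥ v s) t := by
    intro t ht
    have : ContinuousAt (fun y => gradJ y ⬝ᵥ (f y + G y *ᵥ u y)) (x t) := by
      apply Continuous.continuousAt
      simp only [dotProduct, Matrix.mulVec, Pi.add_apply]
      fun_prop
    exact this.comp (hxc t ht)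
  have key : ∀ T : ℝ, 0 ≤ T →
      Jhat (x T) - Jhat (x 0) ≤ (β - 1) * ∫ t in (0:ℝ)..T, r (x t) := by
    intro T hT
    have hxcOn : ContinuousOn x (Set.Icc 0 T) := fun t ht =>
      (hxc t ht.1).continuousWithinAt
    have hder : ContinuousOn (fun s => gradJ (x s) ⬝ᵥ v s) (Set.Icc 0 T) := fun t ht =>
      (hvc t ht.1).continuousWithinAt
    have hint1 : IntervalIntegrable (fun s => gradJ (x s) ⬝ᵥ v s) MeasureTheory.volume 0 T :=
      (hder.mono (by rw [Set.uIcc_of_le hT])).intervalIntegrable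
    have hint2 : IntervalIntegrable (fun s => r (x s)) MeasureTheory.volume 0 T :=
      ((hrc.comp_continuousOn hxcOn).mono (by rw [Set.uIcc_of_le hT])).intervalIntegrable
    have hftc : Jhat (x T) - Jhat (x 0) = ∫ t in (0:ℝ)..T, gradJ (x t) ⬝ᵥ v t := by
      refine (intervalIntegral.integral_eq_sub_of_hasDerivAt
        (f := fun s => Jhat (x s)) (fun t ht => ?_) hint1).symm
      rw [Set.uIcc_of_le hT] at ht
      exact hg t ht.1
    rw [hftc]
    rw [← intervalIntegral.integral_const_mul]
    apply intervalIntegral.integral_mono_on hT hint1 (hint2.const_mul _)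
    intro t ht
    have h := hBr (x t)
    rw [hB] at h
    linarith
  -- take limits
  have hJcont : ContinuousAt Jhat 0 := (hJd 0).differentiableAt.continuousAt
  have hlim1 : Tendsto (fun T => Jhat (x T) - Jhat (x 0)) atTop (𝓝 (0 - Jhat (x 0))) := by
    have : Tendsto (fun T => Jhat (x T)) atTop (𝓝 0) := by
      have := hJcont.tendsto.comp hxlim
      exact (by simpa [hJ0] using this : Tendsto (Jhat ∘ x) atTop (𝓝 0))
    exact this.sub_const _
  have hlim2 : Tendsto (fun T => (β - 1) * ∫ t in (0:ℝ)..T, r (x t)) atTop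
      (𝓝 ((β - 1) * J)) := hJ.const_mul _
  have hfinal : 0 - Jhat (x 0) ≤ (β - 1) * J := by
    refine le_of_tendsto_of_tendsto hlim1 hlim2 ?_
    filter_upwards [eventually_ge_atTop (0:ℝ)] with T hT
    exact key T hT
  linarith
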